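/- For every binary string λ of length n with k ones, there exists exactly one puzzle (tiling of the size-n triangular region by 0-triangles, 1-triangles, ordinary rhombi, and equivariant rhombi with matching edge labels) with boundary Δ_{λλ}^λ (all three sides labeled λ), and its weight is ∏_{(i,j)∈inv(λ)} (y_j − y_i). -/

import Mathlib

def ones (n : ℕ) (l : Fin n → Bool) : ℕ :=
  (Finset.univ.filter (fun i => l i = true)).card

def invCount (n : ℕ) (l : Fin n → Bool) : ℕ :=
  (Finset.univ.filter (fun p : Fin n × Fin n =>
    p.1 < p.2 ∧ l p.1 = true ∧ l p.2 = false)).card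

def psum (n : ℕ) (l : Fin n → Bool) (j : ℕ) : ℕ :=
  (Finset.univ.filter (fun i : Fin n => i.val < j ∧ l i = true)).card

/-- dominance order: `domLE n l l'` means `l ≤ l'`. -/
def domLE (n : ℕ) (l l' : Fin n → Bool) : Prop :=
  ∀ j : ℕ, psum n l j ≤ psum n l' j

/-- the identity string `0^{n-k} 1^k`. -/
def idStr (n k : ℕ) : Fin n → Bool := fun i => decide (n - k ≤ i.val)

/-- the divisor string `0^{n-k-1} 1 0 1^{k-1}`. -/
def dvStr (n k : ℕ) : Fin n → Bool :=
  fun i => decide (i.val = n - k - 1 ∨ n - k + 1 ≤ i.val)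

open MvPolynomial

noncomputable def invProd (n : ℕ) (l : Fin n → Bool) : MvPolynomial (Fin n) ℤ :=
  ∏ p ∈ Finset.univ.filter (fun p : Fin n × Fin n =>
      p.1 < p.2 ∧ l p.1 = true ∧ l p.2 = false), (X p.2 - X p.1)


/-!  Puzzles.  We encode a puzzle of size `n` by labelling the unit edges of
the triangular lattice inside an upward equilateral triangle of side `n`.
Rows are numbered `r = 0, …, n-1` from the top; row `r` contains upward unit
triangles `(r, c)` for `0 ≤ c ≤ r` and downward unit triangles `(r, c)` for
`0 ≤ c < r`.  `L r c`, `R r c`, `B r c` are the labels of the NW-edge, NE-edge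
and S-edge of the upward triangle `(r, c)`; the downward triangle `(r, c)` has
SW-edge `R r c`, SE-edge `L r (c+1)` and N-edge `B (r-1) c`.

Labels `0` and `1` are the puzzle-edge labels; a rhombus piece (two unit
triangles glued along an edge) is encoded by giving its interior diagonal the
label `2` for the three ordinary rhombi, and `3` for the equivariant rhombus
(the N-S rhombus with `0`s and `1`s exchanged).  Thus the allowed labels of an
upward triangle `(NW, NE, S)` are: the two triangle pieces `(0,0,0)`,
`(1,1,1)`; the upper halves `(1,0,2)`, `(2,1,0)`, `(0,2,1)` of the ordinary
N-S, NW-SE and SW-NE rhombi; and the upper half `(0,1,3)` of the equivariant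
piece.  Similarly for downward triangles `(SW, SE, N)`.  -/

/-- allowed labels `(NW, NE, S)` of an upward unit triangle. -/
def UpOK (a b c : ℕ) : Prop :=
  (a, b, c) = (0, 0, 0) ∨ (a, b, c) = (1, 1, 1) ∨ (a, b, c) = (1, 0, 2) ∨
  (a, b, c) = (2, 1, 0) ∨ (a, b, c) = (0, 2, 1) ∨ (a, b, c) = (0, 1, 3)

/-- allowed labels `(SW, SE, N)` of a downward unit triangle. -/
def DownOK (a b c : ℕ) : Prop :=
  (a, b, c) = (0, 0, 0) ∨ (a, b, c) = (1, 1, 1) ∨ (a, b, c) = (0, 1, 2) ∨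
  (a, b, c) = (1, 2, 0) ∨ (a, b, c) = (2, 0, 1) ∨ (a, b, c) = (1, 0, 3)

/-- A puzzle of size `n`: a tiling of the size-`n` upward triangle by
`0`-triangles, `1`-triangles, ordinary rhombi and equivariant rhombi with
matching edge labels (out-of-range labels are normalised to `0`). -/
structure Puzzle (n : ℕ) where
  L : ℕ → ℕ → ℕ
  R : ℕ → ℕ → ℕ
  B : ℕ → ℕ → ℕ
  up_ok : ∀ r c, c ≤ r → r < n → UpOK (L r c) (R r c) (B r c)
  down_ok : ∀ r c, c < r → r < n → DownOK (R r c) (L r (c + 1)) (B (r - 1) c)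
  L_junk : ∀ r c, ¬(c ≤ r ∧ r < n) → L r c = 0
  R_junk : ∀ r c, ¬(c ≤ r ∧ r < n) → R r c = 0
  B_junk : ∀ r c, ¬(c ≤ r ∧ r < n) → B r c = 0

def b2n (b : Bool) : ℕ := if b then 1 else 0

/-- `P` has boundary `Δ_{λμ}^ν`: NW side `λ`, NE side `μ`, S side `ν`, all
read left-to-right. -/
def HasBoundary (n : ℕ) (P : Puzzle n) (lam mu nu : Fin n → Bool) : Prop :=
  (∀ r : Fin n, P.L r.val 0 = b2n (lam ⟨n - 1 - r.val, by have := r.isLt; omega⟩)) ∧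
  (∀ r : Fin n, P.R r.val r.val = b2n (mu r)) ∧
  (∀ c : Fin n, P.B (n - 1) c.val = b2n (nu c))

/-- the weight of a puzzle: the product over its equivariant pieces (the
upward triangle `(r,c)` with S-label `3`) of `y_j - y_i`, where the lines
dropped SW and SE from the piece exit the S side at the `i`-th and `j`-th
places. -/
noncomputable def wt (n : ℕ) (P : Puzzle n) : MvPolynomial (Fin n) ℤ :=
  ∏ r : Fin n, ∏ c : Fin n,
    if h : c.val ≤ r.val ∧ P.B r.val c.val = 3 then
      (X (⟨n - 1 - r.val + c.val, by have := r.isLt; omega⟩ : Fin n) - X c :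
        MvPolynomial (Fin n) ℤ)
    else 1

/-! ### Auxiliary development for `stmt18` -/

namespace Stmt18

open Finset MvPolynomial

/-- the label of the S edge of an upward triangle whose NE edge carries `y`
and whose NW edge carries `z`. -/
def f2 (y z : Bool) : ℕ := if y = z then b2n y else if y then 3 else 2

/-- `lam` extended to all of `ℕ`. -/
def lamx (n : ℕ) (lam : Fin n → Bool) : ℕ → Bool :=
  fun m => if h : m < n then lam ⟨m, h⟩ else false

lemma lamx_eq {n : ℕ} (lam : Fin n → Bool) (i : Fin n) :
    lamx n lam i.val = lam i := by
  simp [lamx, i.isLt]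

lemma b2n_ne_two (b : Bool) : b2n b ≠ 2 := by cases b <;> simp [b2n]

section Canonical

variable (n : ℕ) (lam : Fin n → Bool)

def cL : ℕ → ℕ → ℕ := fun r c =>
  if c ≤ r ∧ r < n then b2n (lamx n lam (n - 1 - r + c)) else 0

def cR : ℕ → ℕ → ℕ := fun r c =>
  if c ≤ r ∧ r < n then b2n (lamx n lam c) else 0

def cB : ℕ → ℕ → ℕ := fun r c =>
  if c ≤ r ∧ r < n then f2 (lamx n lam c) (lamx n lam (n - 1 - r + c)) else 0

lemma upOK_f2 (y z : Bool) : UpOK (b2n z) (b2n y) (f2 y z) := by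
  cases y <;> cases z <;> simp [UpOK, f2, b2n]

lemma downOK_f2 (y z : Bool) : DownOK (b2n y) (b2n z) (f2 y z) := by
  cases y <;> cases z <;> simp [DownOK, f2, b2n]

/-- the canonical puzzle with boundary `Δ_{λλ}^λ`. -/
def cP : Puzzle n where
  L := cL n lam
  R := cR n lam
  B := cB n lam
  up_ok := by
    intro r c hc hr
    simp only [cL, cR, cB, if_pos (⟨hc, hr⟩ : c ≤ r ∧ r < n)]
    exact upOK_f2 _ _
  down_ok := by
    intro r c hc hr
    have h1 : c ≤ r ∧ r < n := ⟨hc.le, hr⟩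
    have h2 : c + 1 ≤ r ∧ r < n := ⟨hc, hr⟩
    have h3 : c ≤ r - 1 ∧ r - 1 < n := ⟨by omega, by omega⟩
    simp only [cL, cR, cB, if_pos h1, if_pos h2, if_pos h3]
    rw [show n - 1 - (r - 1) + c = n - 1 - r + (c + 1) by omega]
    exact downOK_f2 _ _
  L_junk := by intro r c h; simp only [cL, if_neg h]
  R_junk := by intro r c h; simp only [cR, if_neg h]
  B_junk := by intro r c h; simp only [cB, if_neg h]

lemma f2_self (y : Bool) : f2 y y = b2n y := by simp [f2]

lemma cP_boundary : HasBoundary n (cP n lam) lam lam lam := by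
  refine ⟨?_, ?_, ?_⟩
  · intro r
    have h1 : 0 ≤ r.val ∧ r.val < n := ⟨Nat.zero_le _, r.isLt⟩
    show cL n lam r.val 0 = _
    rw [cL, if_pos h1]
    congr 1
    rw [show n - 1 - r.val + 0 = n - 1 - r.val by omega]
    exact lamx_eq lam ⟨n - 1 - r.val, by have := r.isLt; omega⟩
  · intro r
    have h1 : r.val ≤ r.val ∧ r.val < n := ⟨le_rfl, r.isLt⟩
    show cR n lam r.val r.val = _
    rw [cR, if_pos h1]
    congr 1
    exact lamx_eq lam r
  · intro c
    have hn : 0 < n := c.pos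
    have h1 : c.val ≤ n - 1 ∧ n - 1 < n := ⟨by have := c.isLt; omega, by omega⟩
    show cB n lam (n - 1) c.val = _
    rw [cB, if_pos h1]
    rw [show n - 1 - (n - 1) + c.val = c.val by omega, f2_self]
    congr 1
    exact lamx_eq lam c

end Canonical

/-! ### conserved quantities -/

def irho (x : ℕ) : ℤ := if x = 1 ∨ x = 3 then 1 else 0
def isig (x : ℕ) : ℤ := if x = 1 ∨ x = 2 then 1 else 0
def ivv (x : ℕ) : ℤ := if x = 1 then 1 else 0
def i2v (x : ℕ) : ℤ := if x = 2 then 1 else 0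

lemma i2v_nonneg (x : ℕ) : 0 ≤ i2v x := by unfold i2v; split <;> norm_num

lemma i2v_b2n (b : Bool) : i2v (b2n b) = 0 := by cases b <;> simp [i2v, b2n]

lemma irho_b2n (b : Bool) : irho (b2n b) = if b then 1 else 0 := by
  cases b <;> simp [irho, b2n]

lemma isig_b2n (b : Bool) : isig (b2n b) = if b then 1 else 0 := by
  cases b <;> simp [isig, b2n]

lemma ivv_b2n (b : Bool) : ivv (b2n b) = if b then 1 else 0 := by
  cases b <;> simp [ivv, b2n]

lemma up_rho {a b s : ℕ} (h : UpOK a b s) : irho s = isig b - i2v a := by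
  simp only [UpOK, Prod.mk.injEq] at h
  rcases h with ⟨rfl, rfl, rfl⟩ | ⟨rfl, rfl, rfl⟩ | ⟨rfl, rfl, rfl⟩ |
    ⟨rfl, rfl, rfl⟩ | ⟨rfl, rfl, rfl⟩ | ⟨rfl, rfl, rfl⟩ <;> decide

lemma up_ell {a b s : ℕ} (h : UpOK a b s) : isig s = ivv a + i2v b := by
  simp only [UpOK, Prod.mk.injEq] at h
  rcases h with ⟨rfl, rfl, rfl⟩ | ⟨rfl, rfl, rfl⟩ | ⟨rfl, rfl, rfl⟩ |
    ⟨rfl, rfl, rfl⟩ | ⟨rfl, rfl, rfl⟩ | ⟨rfl, rfl, rfl⟩ <;> decide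

lemma down_rho {a b t : ℕ} (h : DownOK a b t) : irho t = isig a - i2v b := by
  simp only [DownOK, Prod.mk.injEq] at h
  rcases h with ⟨rfl, rfl, rfl⟩ | ⟨rfl, rfl, rfl⟩ | ⟨rfl, rfl, rfl⟩ |
    ⟨rfl, rfl, rfl⟩ | ⟨rfl, rfl, rfl⟩ | ⟨rfl, rfl, rfl⟩ <;> decide

lemma down_ell {a b t : ℕ} (h : DownOK a b t) : isig t = ivv b + i2v a := by
  simp only [DownOK, Prod.mk.injEq] at h
  rcases h with ⟨rfl, rfl, rfl⟩ | ⟨rfl, rfl, rfl⟩ | ⟨rfl, rfl, rfl⟩ |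
    ⟨rfl, rfl, rfl⟩ | ⟨rfl, rfl, rfl⟩ | ⟨rfl, rfl, rfl⟩ <;> decide

/-! ### row sums -/

section Uniq

variable {n : ℕ} (P : Puzzle n) (lam : Fin n → Bool)

def li (n : ℕ) (lam : Fin n → Bool) (m : ℕ) : ℤ := if lamx n lam m then 1 else 0

def Prho (r : ℕ) : ℤ := ∑ c ∈ Finset.range (r + 1), (c : ℤ) * irho (P.B r c)

def Qell (r : ℕ) : ℤ :=
  ∑ c ∈ Finset.range (r + 1), (((n - 1 - r : ℕ) : ℤ) + (c : ℤ)) * isig (P.B r c)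

lemma rowrho (hb : HasBoundary n P lam lam lam) (r : ℕ) (h0 : 0 < r) (hr : r < n) :
    Prho P r = Prho P (r - 1) + (r : ℤ) * li n lam r
      - ∑ c ∈ Finset.range r, i2v (P.L r (c + 1)) := by
  have key : ∀ c ∈ Finset.range r, (c : ℤ) * irho (P.B r c)
      = (c : ℤ) * irho (P.B (r - 1) c)
        + (((c + 1 : ℕ) : ℤ) * i2v (P.L r (c + 1)) - (c : ℤ) * i2v (P.L r c))
        - i2v (P.L r (c + 1)) := by
    intro c hc
    rw [Finset.mem_range] at hc
    have h1 := up_rho (P.up_ok r c hc.le hr)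
    have h2 := down_rho (P.down_ok r c hc hr)
    rw [h1, h2]
    push_cast
    ring
  have hlast : irho (P.B r r) = li n lam r - i2v (P.L r r) := by
    have h1 := up_rho (P.up_ok r r le_rfl hr)
    rw [h1, hb.2.1 ⟨r, hr⟩, isig_b2n]
    have : lam ⟨r, hr⟩ = lamx n lam r := (lamx_eq lam ⟨r, hr⟩).symm
    rw [this, li]
  have e1 : Prho P r
      = (∑ c ∈ Finset.range r, (c : ℤ) * irho (P.B r c)) + (r : ℤ) * irho (P.B r r) :=
    Finset.sum_range_succ _ r
  have e2 : Prho P (r - 1) = ∑ c ∈ Finset.range r, (c : ℤ) * irho (P.B (r - 1) c) := by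
    unfold Prho; rw [show r - 1 + 1 = r by omega]
  have e3 : ∑ c ∈ Finset.range r,
      (((c + 1 : ℕ) : ℤ) * i2v (P.L r (c + 1)) - (c : ℤ) * i2v (P.L r c))
      = (r : ℤ) * i2v (P.L r r) := by
    have h := Finset.sum_range_sub (f := fun c => (c : ℤ) * i2v (P.L r c)) r
    simpa using h
  rw [e1, Finset.sum_congr rfl key]
  rw [Finset.sum_sub_distrib, Finset.sum_add_distrib, e3, hlast, ← e2]
  ring

lemma rowell (hb : HasBoundary n P lam lam lam) (r : ℕ) (h0 : 0 < r) (hr : r < n) :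
    Qell P r = Qell P (r - 1) + ((n - 1 - r : ℕ) : ℤ) * li n lam (n - 1 - r)
      - ∑ c ∈ Finset.range r, i2v (P.R r c) := by
  set m : ℤ := ((n - 1 - r : ℕ) : ℤ) with hm
  have key : ∀ c ∈ Finset.range r, (m + ((c + 1 : ℕ) : ℤ)) * isig (P.B r (c + 1))
      = (m + 1 + (c : ℤ)) * isig (P.B (r - 1) c)
        + (((m + ((c + 1 : ℕ) : ℤ)) * i2v (P.R r (c + 1))) - (m + (c : ℤ)) * i2v (P.R r c))
        - i2v (P.R r c) := by
    intro c hc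
    rw [Finset.mem_range] at hc
    have h1 := up_ell (P.up_ok r (c + 1) (by omega) hr)
    have h2 := down_ell (P.down_ok r c hc hr)
    rw [h1, h2]
    push_cast
    ring
  have hfirst : isig (P.B r 0) = li n lam (n - 1 - r) + i2v (P.R r 0) := by
    have h1 := up_ell (P.up_ok r 0 (Nat.zero_le _) hr)
    rw [h1, hb.1 ⟨r, hr⟩, ivv_b2n]
    have : lam ⟨n - 1 - r, by omega⟩ = lamx n lam (n - 1 - r) :=
      (lamx_eq lam ⟨n - 1 - r, by omega⟩).symm
    rw [this, li]
  have e1 : Qell P r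
      = (∑ c ∈ Finset.range r, (m + ((c + 1 : ℕ) : ℤ)) * isig (P.B r (c + 1)))
        + (m + ((0 : ℕ) : ℤ)) * isig (P.B r 0) := by
    unfold Qell
    rw [Finset.sum_range_succ' (fun c => (m + (c : ℤ)) * isig (P.B r c)) r]
  have e2 : Qell P (r - 1) = ∑ c ∈ Finset.range r, (m + 1 + (c : ℤ)) * isig (P.B (r - 1) c) := by
    unfold Qell
    rw [show r - 1 + 1 = r by omega]
    apply Finset.sum_congr rfl
    intro c _
    congr 2
    rw [hm]
    push_cast [show n - 1 - (r - 1) = n - 1 - r + 1 by omega]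
    ring
  have e3 : ∑ c ∈ Finset.range r,
      (((m + ((c + 1 : ℕ) : ℤ)) * i2v (P.R r (c + 1))) - (m + (c : ℤ)) * i2v (P.R r c))
      = (m + (r : ℤ)) * i2v (P.R r r) - (m + 0) * i2v (P.R r 0) := by
    have h := Finset.sum_range_sub (f := fun c => (m + (c : ℤ)) * i2v (P.R r c)) r
    simpa using h
  have hRr : i2v (P.R r r) = 0 := by rw [hb.2.1 ⟨r, hr⟩, i2v_b2n]
  rw [e1, Finset.sum_congr rfl key]
  rw [Finset.sum_sub_distrib, Finset.sum_add_distrib, e3, hfirst, ← e2, hRr]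
  push_cast
  ring

lemma globrho (hb : HasBoundary n P lam lam lam) :
    ∀ r, r < n → Prho P r = (∑ r' ∈ Finset.range (r + 1), (r' : ℤ) * li n lam r')
      - ∑ r' ∈ Finset.range (r + 1), ∑ c ∈ Finset.range r', i2v (P.L r' (c + 1)) := by
  intro r
  induction r with
  | zero => intro _; simp [Prho]
  | succ m ih =>
    intro h
    rw [Finset.sum_range_succ (fun r' => (r' : ℤ) * li n lam r') (m + 1),
      Finset.sum_range_succ (fun r' => ∑ c ∈ Finset.range r', i2v (P.L r' (c + 1))) (m + 1),
      rowrho P lam hb (m + 1) (Nat.succ_pos m) h]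
    have hm : m + 1 - 1 = m := rfl
    rw [hm, ih (by omega)]
    ring

lemma globell (hb : HasBoundary n P lam lam lam) :
    ∀ r, r < n → Qell P r
      = (∑ r' ∈ Finset.range (r + 1), ((n - 1 - r' : ℕ) : ℤ) * li n lam (n - 1 - r'))
      - ∑ r' ∈ Finset.range (r + 1), ∑ c ∈ Finset.range r', i2v (P.R r' c) := by
  intro r
  induction r with
  | zero =>
    intro h
    have h1 := up_ell (P.up_ok 0 0 le_rfl h)
    have hR0 : i2v (P.R 0 0) = 0 := by rw [hb.2.1 ⟨0, h⟩, i2v_b2n]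
    simp only [Qell, zero_add, Finset.sum_range_one, Finset.sum_range_zero]
    rw [h1, hb.1 ⟨0, h⟩, ivv_b2n, hR0]
    have : lam ⟨n - 1 - 0, by omega⟩ = lamx n lam (n - 1 - 0) :=
      (lamx_eq lam ⟨n - 1 - 0, by omega⟩).symm
    rw [this]
    simp [li]
  | succ m ih =>
    intro h
    rw [Finset.sum_range_succ (fun r' => ((n - 1 - r' : ℕ) : ℤ) * li n lam (n - 1 - r')) (m + 1),
      Finset.sum_range_succ (fun r' => ∑ c ∈ Finset.range r', i2v (P.R r' c)) (m + 1),
      rowell P lam hb (m + 1) (Nat.succ_pos m) h]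
    have hm : m + 1 - 1 = m := rfl
    rw [hm, ih (by omega)]
    ring

end Uniq


section NoTwo

variable {n : ℕ} (P : Puzzle n) (lam : Fin n → Bool)

lemma sumLR_zero (hb : HasBoundary n P lam lam lam) (hn : 0 < n) :
    (∑ r' ∈ Finset.range n, ∑ c ∈ Finset.range r', i2v (P.L r' (c + 1))) = 0 ∧
    (∑ r' ∈ Finset.range n, ∑ c ∈ Finset.range r', i2v (P.R r' c)) = 0 := by
  have hbot : ∀ c : ℕ, c < n → P.B (n - 1) c = b2n (lamx n lam c) := by
    intro c hc
    rw [hb.2.2 ⟨c, hc⟩]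
    congr 1
    exact (lamx_eq lam ⟨c, hc⟩).symm
  have hone : n - 1 + 1 = n := by omega
  constructor
  · have hg := globrho P lam hb (n - 1) (by omega)
    rw [hone] at hg
    have hfin : Prho P (n - 1) = ∑ c ∈ Finset.range n, (c : ℤ) * li n lam c := by
      unfold Prho
      rw [hone]
      refine Finset.sum_congr rfl (fun c hc => ?_)
      rw [Finset.mem_range] at hc
      rw [hbot c hc, irho_b2n, li]
    rw [hfin] at hg
    omega
  · have hg := globell P lam hb (n - 1) (by omega)
    rw [hone] at hg
    have hfin : Qell P (n - 1) = ∑ c ∈ Finset.range n, (c : ℤ) * li n lam c := by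
      unfold Qell
      rw [hone]
      refine Finset.sum_congr rfl (fun c hc => ?_)
      rw [Finset.mem_range] at hc
      rw [hbot c hc, isig_b2n, show n - 1 - (n - 1) = 0 by omega, li]
      push_cast
      ring
    have hrefl : (∑ r' ∈ Finset.range n, ((n - 1 - r' : ℕ) : ℤ) * li n lam (n - 1 - r'))
        = ∑ c ∈ Finset.range n, (c : ℤ) * li n lam c :=
      Finset.sum_range_reflect (fun i => (i : ℤ) * li n lam i) n
    rw [hfin, hrefl] at hg
    omega

lemma noL2 (hb : HasBoundary n P lam lam lam) :
    ∀ r, r < n → ∀ c, c < r → P.L r (c + 1) ≠ 2 := by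
  intro r hr c hc hL
  have hn : 0 < n := by omega
  have h := (sumLR_zero P lam hb hn).1
  have h1 : ∀ r' ∈ Finset.range n, (0:ℤ) ≤ ∑ c ∈ Finset.range r', i2v (P.L r' (c + 1)) :=
    fun r' _ => Finset.sum_nonneg (fun c _ => i2v_nonneg _)
  have h2 := (Finset.sum_eq_zero_iff_of_nonneg h1).mp h r (Finset.mem_range.mpr hr)
  have h3 := (Finset.sum_eq_zero_iff_of_nonneg
    (fun c _ => i2v_nonneg (P.L r (c + 1)))).mp h2 c (Finset.mem_range.mpr hc)
  rw [hL] at h3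
  simp [i2v] at h3

lemma noR2 (hb : HasBoundary n P lam lam lam) :
    ∀ r, r < n → ∀ c, c < r → P.R r c ≠ 2 := by
  intro r hr c hc hR
  have hn : 0 < n := by omega
  have h := (sumLR_zero P lam hb hn).2
  have h1 : ∀ r' ∈ Finset.range n, (0:ℤ) ≤ ∑ c ∈ Finset.range r', i2v (P.R r' c) :=
    fun r' _ => Finset.sum_nonneg (fun c _ => i2v_nonneg _)
  have h2 := (Finset.sum_eq_zero_iff_of_nonneg h1).mp h r (Finset.mem_range.mpr hr)
  have h3 := (Finset.sum_eq_zero_iff_of_nonneg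
    (fun c _ => i2v_nonneg (P.R r c))).mp h2 c (Finset.mem_range.mpr hc)
  rw [hR] at h3
  simp [i2v] at h3

end NoTwo

/-! ### determinism -/

lemma Bdet {a b s : ℕ} {y z : Bool} (h : UpOK a b s) (hL : a = b2n z) (hR : b = b2n y) :
    s = f2 y z := by
  subst hL hR
  simp only [UpOK, Prod.mk.injEq] at h
  cases y <;> cases z <;>
    rcases h with ⟨h1, h2, rfl⟩ | ⟨h1, h2, rfl⟩ | ⟨h1, h2, rfl⟩ |
      ⟨h1, h2, rfl⟩ | ⟨h1, h2, rfl⟩ | ⟨h1, h2, rfl⟩ <;>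
    simp_all [f2, b2n]

lemma Ddet {a b t : ℕ} (y z : Bool) (h : DownOK a b t) (ha : a ≠ 2) (hb2 : b ≠ 2)
    (ht : t = f2 y z) : a = b2n y ∧ b = b2n z := by
  subst ht
  simp only [DownOK, Prod.mk.injEq] at h
  cases y <;> cases z <;>
    rcases h with ⟨rfl, rfl, h3⟩ | ⟨rfl, rfl, h3⟩ | ⟨rfl, rfl, h3⟩ |
      ⟨rfl, rfl, h3⟩ | ⟨rfl, rfl, h3⟩ | ⟨rfl, rfl, h3⟩ <;>
    simp_all [f2, b2n]

section Det

variable {n : ℕ} (P : Puzzle n) (lam : Fin n → Bool)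

lemma main_det (hb : HasBoundary n P lam lam lam) :
    ∀ r, r < n → ∀ c, c ≤ r →
      P.L r c = b2n (lamx n lam (n - 1 - r + c)) ∧ P.R r c = b2n (lamx n lam c) := by
  intro r
  induction r with
  | zero =>
    intro hr c hc
    obtain rfl : c = 0 := by omega
    constructor
    · rw [hb.1 ⟨0, hr⟩]
      congr 1
      rw [show n - 1 - 0 + 0 = n - 1 - 0 by omega]
      exact (lamx_eq lam ⟨n - 1 - 0, by omega⟩).symm
    · rw [hb.2.1 ⟨0, hr⟩]
      congr 1
      exact (lamx_eq lam ⟨0, hr⟩).symm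
  | succ m ih =>
    intro hr c hc
    have hm : m < n := by omega
    have hB : ∀ c', c' ≤ m → P.B m c' = f2 (lamx n lam c') (lamx n lam (n - 1 - m + c')) := by
      intro c' hc'
      obtain ⟨hL, hR⟩ := ih hm c' hc'
      exact Bdet (P.up_ok m c' hc' hm) hL hR
    have hA : ∀ c', c' < m + 1 →
        P.R (m + 1) c' = b2n (lamx n lam c') ∧
        P.L (m + 1) (c' + 1) = b2n (lamx n lam (n - 1 - (m + 1) + (c' + 1))) := by
      intro c' hc'
      have hd := P.down_ok (m + 1) c' hc' hr
      rw [show m + 1 - 1 = m from rfl] at hd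
      have hdet := Ddet (lamx n lam c') (lamx n lam (n - 1 - m + c')) hd
        (noR2 P lam hb (m + 1) hr c' hc') (noL2 P lam hb (m + 1) hr c' hc')
        (hB c' (by omega))
      rw [show n - 1 - (m + 1) + (c' + 1) = n - 1 - m + c' by omega]
      exact hdet
    constructor
    · match c with
      | 0 =>
        rw [hb.1 ⟨m + 1, hr⟩]
        congr 1
        rw [show n - 1 - (m + 1) + 0 = n - 1 - (m + 1) by omega]
        exact (lamx_eq lam ⟨n - 1 - (m + 1), by omega⟩).symm
      | c' + 1 => exact (hA c' (by omega)).2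
    · rcases Nat.lt_or_ge c (m + 1) with h | h
      · exact (hA c h).1
      · obtain rfl : c = m + 1 := by omega
        rw [hb.2.1 ⟨m + 1, hr⟩]
        congr 1
        exact (lamx_eq lam ⟨m + 1, hr⟩).symm

lemma main_detB (hb : HasBoundary n P lam lam lam) :
    ∀ r, r < n → ∀ c, c ≤ r →
      P.B r c = f2 (lamx n lam c) (lamx n lam (n - 1 - r + c)) := by
  intro r hr c hc
  obtain ⟨hL, hR⟩ := main_det P lam hb r hr c hc
  exact Bdet (P.up_ok r c hc hr) hL hR

lemma puzzle_ext {P Q : Puzzle n} (hL : P.L = Q.L) (hR : P.R = Q.R) (hB : P.B = Q.B) :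
    P = Q := by
  cases P; cases Q
  simp only at hL hR hB
  subst hL; subst hR; subst hB
  rfl

lemma uniq (hb : HasBoundary n P lam lam lam) : P = cP n lam := by
  apply puzzle_ext
  · funext r c
    by_cases h : c ≤ r ∧ r < n
    · rw [(main_det P lam hb r h.2 c h.1).1]
      show _ = cL n lam r c
      rw [cL, if_pos h]
    · rw [P.L_junk r c h]
      show _ = cL n lam r c
      rw [cL, if_neg h]
  · funext r c
    by_cases h : c ≤ r ∧ r < n
    · rw [(main_det P lam hb r h.2 c h.1).2]
      show _ = cR n lam r c
      rw [cR, if_pos h]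
    · rw [P.R_junk r c h]
      show _ = cR n lam r c
      rw [cR, if_neg h]
  · funext r c
    by_cases h : c ≤ r ∧ r < n
    · rw [main_detB P lam hb r h.2 c h.1]
      show _ = cB n lam r c
      rw [cB, if_pos h]
    · rw [P.B_junk r c h]
      show _ = cB n lam r c
      rw [cB, if_neg h]

end Det


/-! ### the weight of the canonical puzzle -/

section Weight

variable (n : ℕ) (lam : Fin n → Bool)

lemma cB_eq_three_iff (r c : ℕ) (h : c ≤ r ∧ r < n) :
    cB n lam r c = 3 ↔ (lamx n lam c = true ∧ lamx n lam (n - 1 - r + c) = false) := by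
  rw [cB, if_pos h]
  cases h1 : lamx n lam c <;> cases h2 : lamx n lam (n - 1 - r + c) <;>
    simp [f2, b2n, h1, h2]

def jdx (r c : Fin n) : Fin n :=
  if h : c.val ≤ r.val then
    ⟨n - 1 - r.val + c.val, by have := r.isLt; have := c.isLt; omega⟩
  else c

lemma jdx_val (r c : Fin n) (h : c.val ≤ r.val) :
    (jdx n r c).val = n - 1 - r.val + c.val := by
  rw [jdx, dif_pos h]

lemma wt_cP : wt n (cP n lam) = invProd n lam := by
  unfold wt invProd
  have e1 : (∏ r : Fin n, ∏ c : Fin n,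
      if h : c.val ≤ r.val ∧ (cP n lam).B r.val c.val = 3 then
        (X (⟨n - 1 - r.val + c.val, by have := r.isLt; omega⟩ : Fin n) - X c :
          MvPolynomial (Fin n) ℤ)
      else 1)
      = ∏ r : Fin n, ∏ c : Fin n,
        (if c.val ≤ r.val ∧ cB n lam r.val c.val = 3 then
          (X (jdx n r c) - X c : MvPolynomial (Fin n) ℤ) else 1) := by
    refine Finset.prod_congr rfl (fun r _ => Finset.prod_congr rfl (fun c _ => ?_))
    by_cases h : c.val ≤ r.val ∧ (cP n lam).B r.val c.val = 3
    · have h' : c.val ≤ r.val ∧ cB n lam r.val c.val = 3 := h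
      rw [dif_pos h, if_pos h']
      congr 2
      exact Fin.ext (jdx_val n r c h.1).symm
    · have h' : ¬(c.val ≤ r.val ∧ cB n lam r.val c.val = 3) := h
      rw [dif_neg h, if_neg h']
  rw [e1]
  rw [← Finset.prod_product', Finset.univ_product_univ, ← Finset.prod_filter]
  refine Finset.prod_nbij' (fun p => (p.2, jdx n p.1 p.2))
    (fun q => (⟨n - 1 - (q.2.val - q.1.val), by have := q.1.isLt; omega⟩, q.1))
    ?_ ?_ ?_ ?_ ?_
  · intro p hp
    rw [Finset.mem_filter] at hp ⊢
    obtain ⟨-, h1, h2⟩ := hp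
    have hrn := p.1.isLt
    rw [cB_eq_three_iff n lam p.1.val p.2.val ⟨h1, hrn⟩] at h2
    have hj := jdx_val n p.1 p.2 h1
    have hcj : lam (jdx n p.1 p.2) = false := by
      rw [← lamx_eq lam (jdx n p.1 p.2), hj]
      exact h2.2
    have hcc : lam p.2 = true := by
      rw [← lamx_eq lam p.2]
      exact h2.1
    refine ⟨Finset.mem_univ _, ?_, hcc, hcj⟩
    · have : p.2.val < (jdx n p.1 p.2).val := by
        rw [hj]
        rcases Nat.eq_zero_or_pos (n - 1 - p.1.val) with hz | hz
        · exfalso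
          obtain ⟨ha, hbb⟩ := h2
          rw [hz, zero_add, ha] at hbb
          exact Bool.noConfusion hbb
        · omega
      exact this
  · intro q hq
    rw [Finset.mem_filter] at hq ⊢
    obtain ⟨-, h1, h2, h3⟩ := hq
    have hin := q.1.isLt
    have hjn := q.2.isLt
    have hlt : q.1.val < q.2.val := h1
    refine ⟨Finset.mem_univ _, ?_, ?_⟩
    · show q.1.val ≤ n - 1 - (q.2.val - q.1.val)
      omega
    · show cB n lam (n - 1 - (q.2.val - q.1.val)) q.1.val = 3
      rw [cB_eq_three_iff n lam (n - 1 - (q.2.val - q.1.val)) q.1.val ⟨by omega, by omega⟩]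
      constructor
      · rw [lamx_eq lam q.1]; exact h2
      · rw [show n - 1 - (n - 1 - (q.2.val - q.1.val)) + q.1.val = q.2.val by omega]
        rw [lamx_eq lam q.2]; exact h3
  · intro p hp
    dsimp only
    rw [Finset.mem_filter] at hp
    obtain ⟨-, h1, -⟩ := hp
    have hj := jdx_val n p.1 p.2 h1
    have hrn := p.1.isLt
    refine Prod.ext ?_ rfl
    · apply Fin.ext
      show n - 1 - ((jdx n p.1 p.2).val - p.2.val) = p.1.val
      rw [hj]; omega
  · intro q hq
    dsimp only
    rw [Finset.mem_filter] at hq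
    obtain ⟨-, h1, -, -⟩ := hq
    have hin := q.1.isLt
    have hjn := q.2.isLt
    have hlt : q.1.val < q.2.val := h1
    refine Prod.ext rfl ?_
    · apply Fin.ext
      rw [jdx_val n _ q.1 (by show q.1.val ≤ n - 1 - (q.2.val - q.1.val); omega)]
      show n - 1 - (n - 1 - (q.2.val - q.1.val)) + q.1.val = q.2.val
      omega
  · intro p _
    rfl

end Weight


end Stmt18


/-- for every binary string `λ` of length `n` with `k` ones
there is exactly one puzzle with boundary `Δ_{λλ}^λ`, and its weight is
`∏_{(i,j)∈inv(λ)}(yⱼ-yᵢ)`. -/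
theorem stmt18 (n k : ℕ) (hk : k ≤ n) (lam : Fin n → Bool)
    (hlam : ones n lam = k) :
    (∃! P : Puzzle n, HasBoundary n P lam lam lam) ∧
    (∀ P : Puzzle n, HasBoundary n P lam lam lam → wt n P = invProd n lam) := by
  constructor
  · exact ⟨Stmt18.cP n lam, Stmt18.cP_boundary n lam,
      fun Q hQ => Stmt18.uniq Q lam hQ⟩
  · intro P hP
    rw [Stmt18.uniq P lam hP]
    exact Stmt18.wt_cP n lam
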